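/- Let k be a power of 2 with k ≥ 2, and let F be a regular intersecting family of k-element subsets of [2k]. Then |F| ≤ C(2k-1, k) - 3. -/

import Mathlib

open Finset

-- parity: rows 2^s - 1 of Pascal are all odd
lemma odd_row (s : ℕ) : ∀ j ≤ 2 ^ s - 1, (2 ^ s - 1).choose j % 2 = 1 := by
  induction s with
  | zero => intro j hj; interval_cases j <;> simp
  | succ s ih =>
    intro j hj
    have h2 : (2:ℕ) ^ (s+1) - 1 = 2 * (2 ^ s - 1) + 1 := by
      have : (2:ℕ) ^ s ≥ 1 := Nat.one_le_two_pow
      rw [pow_succ]; omega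
    have hmod : ((2:ℕ) ^ (s+1) - 1) % 2 = 1 := by omega
    have hdiv : ((2:ℕ) ^ (s+1) - 1) / 2 = 2 ^ s - 1 := by omega
    have key := @Choose.choose_modEq_choose_mod_mul_choose_div_nat (2 ^ (s+1) - 1) j 2 ⟨Nat.prime_two⟩
    rw [hmod, hdiv] at key
    have hj2 : j / 2 ≤ 2 ^ s - 1 := by omega
    have hjm : Nat.choose 1 (j % 2) = 1 := by
      have : j % 2 < 2 := Nat.mod_lt _ (by norm_num)
      interval_cases h : j % 2 <;> simp
    unfold Nat.ModEq at key
    rw [key, Nat.mul_mod, hjm, ih _ hj2]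

lemma card_pcard_mem {α : Type*} [DecidableEq α] (s : Finset α) (m : ℕ) (a : α) (ha : a ∈ s) :
    ((s.powersetCard (m+1)).filter (fun t => a ∈ t)).card = (s.card - 1).choose m := by
  rw [← Finset.card_erase_of_mem ha, ← Finset.card_powersetCard]
  refine Finset.card_bij' (fun t _ => t.erase a) (fun u _ => insert a u) ?hi ?hj ?li ?ri
  case hi =>
    intro t ht
    simp only [mem_filter, Finset.mem_powersetCard] at ht
    simp only [Finset.mem_powersetCard]
    exact ⟨Finset.erase_subset_erase a ht.1.1, by rw [Finset.card_erase_of_mem ht.2, ht.1.2]; omega⟩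
  case hj =>
    intro u hu
    simp only [Finset.mem_powersetCard] at hu
    have hau : a ∉ u := fun h => (Finset.mem_erase.mp (hu.1 h)).1 rfl
    simp only [mem_filter, Finset.mem_powersetCard]
    refine ⟨⟨?_, ?_⟩, Finset.mem_insert_self a u⟩
    · intro z hz
      rcases Finset.mem_insert.mp hz with rfl | h
      · exact ha
      · exact (Finset.mem_erase.mp (hu.1 h)).2
    · rw [Finset.card_insert_of_notMem hau, hu.2]
  case li =>
    intro t ht
    simp only [mem_filter] at ht
    exact Finset.insert_erase ht.2
  case ri =>
    intro u hu
    simp only [Finset.mem_powersetCard] at hu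
    have hau : a ∉ u := fun h => (Finset.mem_erase.mp (hu.1 h)).1 rfl
    exact Finset.erase_insert hau

lemma even_central (m : ℕ) (hm : 1 ≤ m) : Even ((2*m).choose m) := by
  obtain ⟨j, rfl⟩ := Nat.exists_eq_add_of_le hm
  have h1 : 2 * (1 + j) = (2*j+1) + 1 := by ring
  have h2 : (1:ℕ) + j = j + 1 := by ring
  rw [h1, h2, Nat.choose_succ_succ]
  have h3 : (2*j+1).choose (j+1) = (2*j+1).choose j := by
    have := Nat.choose_symm (n := 2*j+1) (k := j+1) (by omega)
    simpa [show 2*j+1-(j+1) = j by omega] using this.symm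
  rw [h3]
  exact ⟨(2*j+1).choose j, by ring⟩

lemma sum_deg {n : ℕ} (F : Finset (Finset (Fin n))) :
    ∑ x : Fin n, (F.filter (fun A => x ∈ A)).card = ∑ A ∈ F, A.card := by
  simp_rw [Finset.card_filter]
  rw [Finset.sum_comm]
  refine Finset.sum_congr rfl fun A _ => ?_
  rw [Finset.sum_ite_mem, Finset.univ_inter, Finset.card_eq_sum_ones]

theorem power_of_two_bound (k : ℕ) (hk : 2 ≤ k) (ht : ∃ t : ℕ, k = 2 ^ t)
    (F : Finset (Finset (Fin (2 * k))))
    (hcard : ∀ A ∈ F, A.card = k)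
    (hint : ∀ A ∈ F, ∀ B ∈ F, (A ∩ B).Nonempty)
    (hreg : ∀ x y : Fin (2 * k),
      (F.filter (fun A => x ∈ A)).card = (F.filter (fun A => y ∈ A)).card) :
    F.card ≤ (2 * k - 1).choose k - 3 := by
  classical
  obtain ⟨t, htk⟩ := ht
  have hk0 : 0 < k := by omega
  have h2k : (0:ℕ) < 2 * k := by omega
  let x₀ : Fin (2*k) := ⟨0, h2k⟩
  -- Step A : F.card is even
  set r := (F.filter (fun A => x₀ ∈ A)).card with hr
  have hF2r : F.card = 2 * r := by
    have h1 : ∑ x : Fin (2*k), (F.filter (fun A => x ∈ A)).card = 2*k*r := by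
      rw [Finset.sum_congr rfl (fun x _ => hreg x x₀)]
      simp [Finset.card_univ, mul_comm, mul_assoc]
      exact Or.inl hr.symm
    have h2 : ∑ A ∈ F, A.card = F.card * k := by
      rw [Finset.sum_congr rfl hcard, Finset.sum_const, smul_eq_mul]
    have h3 := sum_deg F
    have h4 : F.card * k = 2 * r * k := by rw [← h2, ← h3, h1]; ring
    exact Nat.eq_of_mul_eq_mul_right hk0 h4
  -- the pairing map
  let g : Finset (Fin (2*k)) → Finset (Fin (2*k)) := fun B => if x₀ ∈ B then B else Bᶜ
  have hcompl : ∀ B ∈ F, (Bᶜ : Finset (Fin (2*k))).card = k := by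
    intro B hB
    rw [Finset.card_compl, hcard B hB, Fintype.card_fin]
    omega
  set P := ((univ : Finset (Fin (2*k))).powersetCard k).filter (fun S => x₀ ∈ S) with hP
  have hcardP : P.card = (2*k-1).choose (k-1) := by
    have h := card_pcard_mem (univ : Finset (Fin (2*k))) (k-1) x₀ (mem_univ _)
    rw [show k - 1 + 1 = k by omega] at h
    rw [hP, h, Finset.card_univ, Fintype.card_fin]
  have hgP : ∀ B ∈ F, g B ∈ P := by
    intro B hB
    by_cases hx : x₀ ∈ B
    · simp only [g, if_pos hx, hP, mem_filter, Finset.mem_powersetCard_univ]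
      exact ⟨hcard B hB, hx⟩
    · simp only [g, if_neg hx, hP, mem_filter, Finset.mem_powersetCard_univ]
      exact ⟨hcompl B hB, Finset.mem_compl.mpr hx⟩
  have hginj : ∀ B1 ∈ F, ∀ B2 ∈ F, g B1 = g B2 → B1 = B2 := by
    intro B1 h1 B2 h2 hgeq
    obtain ⟨a, ha⟩ := hint B1 h1 B2 h2
    rw [Finset.mem_inter] at ha
    by_cases hx1 : x₀ ∈ B1 <;> by_cases hx2 : x₀ ∈ B2 <;>
      simp only [g, if_pos, if_neg, hx1, hx2, ite_true, ite_false] at hgeq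
    · exact hgeq
    · exact absurd (hgeq ▸ ha.1) (by simp [ha.2])
    · exact absurd (hgeq.symm ▸ ha.2) (by simp [ha.1])
    · exact compl_injective hgeq
  have himage : (F.image g).card = F.card :=
    Finset.card_image_of_injOn (fun B hB B' hB' h => hginj B hB B' hB' h)
  have hsub : F.image g ⊆ P := Finset.image_subset_iff.mpr hgP
  have hFleP : F.card ≤ P.card := himage ▸ Finset.card_le_card hsub
  -- parity of P.card
  have hPodd : P.card % 2 = 1 := by
    rw [hcardP]
    have h2k1 : 2 * k - 1 = 2 ^ (t+1) - 1 := by rw [pow_succ, htk]; ring_nf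
    rw [h2k1]
    exact odd_row (t+1) (k-1) (by rw [pow_succ, ← htk]; omega)
  -- key step : F.card ≠ P.card - 1
  have hne : F.card ≠ P.card - 1 := by
    intro hEq
    have hP1 : 1 ≤ P.card := by omega
    have hsd : (P \ F.image g).card = 1 := by
      rw [Finset.card_sdiff_of_subset hsub, himage, hEq]
      omega
    obtain ⟨A₀, hA₀⟩ := Finset.card_eq_one.mp hsd
    have hA₀P : A₀ ∈ P := (Finset.sdiff_subset) (hA₀ ▸ Finset.mem_singleton_self A₀)
    have hA₀nim : A₀ ∉ F.image g := by
      have := hA₀ ▸ Finset.mem_singleton_self A₀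
      exact (Finset.mem_sdiff.mp this).2
    have hcover : ∀ S ∈ P, S ≠ A₀ → S ∈ F.image g := by
      intro S hS hSne
      by_contra hno
      have : S ∈ P \ F.image g := Finset.mem_sdiff.mpr ⟨hS, hno⟩
      rw [hA₀] at this
      exact hSne (Finset.mem_singleton.mp this)
    have hA₀mem := Finset.mem_filter.mp hA₀P
    have hA₀card : A₀.card = k := (Finset.mem_powersetCard_univ.mp hA₀mem.1)
    have hx₀A₀ : x₀ ∈ A₀ := hA₀mem.2
    -- pick y₀ outside A₀
    have hcomplA₀ : (A₀ᶜ : Finset (Fin (2*k))).Nonempty := by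
      rw [← Finset.card_pos, Finset.card_compl, hA₀card, Fintype.card_fin]
      omega
    obtain ⟨y₀, hy₀c⟩ := hcomplA₀
    have hy₀A : y₀ ∉ A₀ := Finset.mem_compl.mp hy₀c
    have hxy : x₀ ≠ y₀ := fun h => hy₀A (h ▸ hx₀A₀)
    -- the set Q
    set Q := (((univ : Finset (Fin (2*k))).erase y₀).powersetCard k).filter
        (fun S => x₀ ∈ S) with hQ
    have hcardQ : Q.card = (2*k-2).choose (k-1) := by
      have h := card_pcard_mem ((univ : Finset (Fin (2*k))).erase y₀) (k-1) x₀
        (Finset.mem_erase.mpr ⟨hxy, mem_univ _⟩)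
      rw [show k - 1 + 1 = k by omega] at h
      rw [hQ, h, Finset.card_erase_of_mem (mem_univ _), Finset.card_univ, Fintype.card_fin]
      congr 1
    have hQeven : Even Q.card := by
      rw [hcardQ, show 2*k-2 = 2*(k-1) by omega]
      exact even_central (k-1) (by omega)
    have hA₀Q : A₀ ∈ Q := by
      rw [hQ, Finset.mem_filter, Finset.mem_powersetCard]
      exact ⟨⟨Finset.subset_erase.mpr ⟨Finset.subset_univ _, hy₀A⟩, hA₀card⟩, hx₀A₀⟩
    -- the separating sub-family
    set F' := F.filter (fun B => (x₀ ∈ B ∧ y₀ ∉ B) ∨ (x₀ ∉ B ∧ y₀ ∈ B)) with hF'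
    -- F' is even
    have hF'even : Even F'.card := by
      have e1 : ((F.filter (fun A => x₀ ∈ A)).filter (fun B => y₀ ∈ B)).card +
          ((F.filter (fun A => x₀ ∈ A)).filter (fun B => ¬ y₀ ∈ B)).card
          = (F.filter (fun A => x₀ ∈ A)).card :=
        Finset.card_filter_add_card_filter_not _
      have e2 : ((F.filter (fun A => y₀ ∈ A)).filter (fun B => x₀ ∈ B)).card +
          ((F.filter (fun A => y₀ ∈ A)).filter (fun B => ¬ x₀ ∈ B)).card
          = (F.filter (fun A => y₀ ∈ A)).card :=
        Finset.card_filter_add_card_filter_not _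
      rw [Finset.filter_filter, Finset.filter_filter] at e1 e2
      have e3 : (F.filter (fun B => y₀ ∈ B ∧ x₀ ∈ B)).card
          = (F.filter (fun B => x₀ ∈ B ∧ y₀ ∈ B)).card := by
        congr 1
        apply Finset.filter_congr
        intro B _
        simp [and_comm]
      have e4 := hreg x₀ y₀
      -- so the two "only" counts are equal
      have e5 : (F.filter (fun B => x₀ ∈ B ∧ ¬ y₀ ∈ B)).card
          = (F.filter (fun B => y₀ ∈ B ∧ ¬ x₀ ∈ B)).card := by omega
      have e6 : F'.card = (F.filter (fun B => x₀ ∈ B ∧ ¬ y₀ ∈ B)).card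
          + (F.filter (fun B => ¬ x₀ ∈ B ∧ y₀ ∈ B)).card := by
        rw [hF', Finset.filter_or]
        apply Finset.card_union_of_disjoint
        rw [Finset.disjoint_left]
        intro B hB1 hB2
        rw [Finset.mem_filter] at hB1 hB2
        exact hB2.2.1 hB1.2.1
      have e7 : (F.filter (fun B => ¬ x₀ ∈ B ∧ y₀ ∈ B)).card
          = (F.filter (fun B => y₀ ∈ B ∧ ¬ x₀ ∈ B)).card := by
        congr 1
        apply Finset.filter_congr
        intro B _
        simp [and_comm]
      refine ⟨(F.filter (fun B => x₀ ∈ B ∧ ¬ y₀ ∈ B)).card, ?_⟩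
      omega
    -- g restricted to F' is a bijection onto Q.erase A₀
    have hbij : F'.card = (Q.erase A₀).card := by
      apply Finset.card_bij (fun B _ => g B)
      · intro B hB
        rw [hF', Finset.mem_filter] at hB
        obtain ⟨hBF, hsep⟩ := hB
        have hgim : g B ∈ F.image g := Finset.mem_image_of_mem g hBF
        have hgne : g B ≠ A₀ := fun h => hA₀nim (h ▸ hgim)
        rw [Finset.mem_erase]
        refine ⟨hgne, ?_⟩
        rw [hQ, Finset.mem_filter, Finset.mem_powersetCard]
        rcases hsep with ⟨hx, hy⟩ | ⟨hx, hy⟩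
        · simp only [g, if_pos hx]
          exact ⟨⟨Finset.subset_erase.mpr ⟨Finset.subset_univ _, hy⟩, hcard B hBF⟩, hx⟩
        · simp only [g, if_neg hx]
          refine ⟨⟨Finset.subset_erase.mpr ⟨Finset.subset_univ _, ?_⟩, hcompl B hBF⟩,
            Finset.mem_compl.mpr hx⟩
          simp [hy]
      · intro B1 h1 B2 h2 heq
        rw [hF', Finset.mem_filter] at h1 h2
        exact hginj B1 h1.1 B2 h2.1 heq
      · intro S hS
        rw [Finset.mem_erase] at hS
        obtain ⟨hSne, hSQ⟩ := hS
        rw [hQ, Finset.mem_filter, Finset.mem_powersetCard] at hSQ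
        obtain ⟨⟨hSsub, hScard⟩, hx₀S⟩ := hSQ
        have hy₀S : y₀ ∉ S := (Finset.subset_erase.mp hSsub).2
        have hSP : S ∈ P := by
          rw [hP, Finset.mem_filter, Finset.mem_powersetCard_univ]
          exact ⟨hScard, hx₀S⟩
        obtain ⟨B, hBF, hgB⟩ := Finset.mem_image.mp (hcover S hSP hSne)
        refine ⟨B, ?_, hgB⟩
        rw [hF', Finset.mem_filter]
        refine ⟨hBF, ?_⟩
        by_cases hx : x₀ ∈ B
        · left
          simp only [g, if_pos hx] at hgB
          rw [hgB]
          exact ⟨hx₀S, hy₀S⟩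
        · right
          simp only [g, if_neg hx] at hgB
          refine ⟨hx, ?_⟩
          rw [← hgB] at hy₀S
          simpa using hy₀S
    have hQcard' : (Q.erase A₀).card = Q.card - 1 := Finset.card_erase_of_mem hA₀Q
    have hQpos : 1 ≤ Q.card := Finset.card_pos.mpr ⟨A₀, hA₀Q⟩
    obtain ⟨q, hq⟩ := hQeven
    obtain ⟨f, hf⟩ := hF'even
    omega
  -- conclude
  have hfinal : (2*k-1).choose k = P.card := by
    rw [hcardP]
    have := Nat.choose_symm (n := 2*k-1) (k := k) (by omega)
    rw [show 2*k-1-k = k-1 by omega] at this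
    exact this.symm
  rw [hfinal]
  omega
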